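/- In a topos, given two monic spans of cospans that are horizontally composable (sharing a common foot cospan from z, with both inner spans having monic legs), the horizontally composed span of cospans—formed by pushouts over z of the corresponding apex, middle, and bottom objects—again has monic legs. -/

import Mathlib

open CategoryTheory CategoryTheory.Limits

universe u v

section Aux

variable {C : Type u} [Category.{v} C] [Adhesive C] [HasPushouts C]

/-- Pushing out along a mono on the left leg yields a mono between pushouts. -/
lemma aux_mono_left {z y y₂ w : C} (a : z ⟶ y) (b : z ⟶ w) (a₂ : z ⟶ y₂)
    (μ : y ⟶ y₂) [Mono μ] (h : a ≫ μ = a₂) :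
    Mono (pushout.map a b a₂ b μ (𝟙 w) (𝟙 z) (by simp [h]) (by simp)) := by
  set m := pushout.map a b a₂ b μ (𝟙 w) (𝟙 z) (by simp [h]) (by simp) with hm
  have t : IsPushout b a (pushout.inr a b) (pushout.inl a b) :=
    (IsPushout.of_hasPushout a b).flip
  have s : IsPushout b (a ≫ μ) (pushout.inr a b ≫ m) (pushout.inl a₂ b) := by
    have : pushout.inr a b ≫ m = pushout.inr a₂ b := by rw [hm]; exact (pushout.inr_desc (f := a) (g := b) _ _ _).trans (Category.id_comp _)
    rw [this, h]
    exact (IsPushout.of_hasPushout a₂ b).flip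
  have p : pushout.inl a b ≫ m = μ ≫ pushout.inl a₂ b := by rw [hm]; exact pushout.inl_desc _ _ _
  have P : IsPushout μ (pushout.inl a b) (pushout.inl a₂ b) m :=
    (IsPushout.of_top s p t).flip
  exact Adhesive.mono_of_isPushout_of_mono_left P

/-- Pushing out along a mono on the right leg yields a mono between pushouts. -/
lemma aux_mono_right {z y w w₂ : C} (a : z ⟶ y) (b : z ⟶ w) (b₂ : z ⟶ w₂)
    (κ : w ⟶ w₂) [Mono κ] (h : b ≫ κ = b₂) :
    Mono (pushout.map a b a b₂ (𝟙 y) κ (𝟙 z) (by simp) (by simp [h])) := by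
  set m := pushout.map a b a b₂ (𝟙 y) κ (𝟙 z) (by simp) (by simp [h]) with hm
  have t : IsPushout a b (pushout.inl a b) (pushout.inr a b) :=
    IsPushout.of_hasPushout a b
  have s : IsPushout a (b ≫ κ) (pushout.inl a b ≫ m) (pushout.inr a b₂) := by
    have : pushout.inl a b ≫ m = pushout.inl a b₂ := by rw [hm]; exact (pushout.inl_desc (f := a) (g := b) _ _ _).trans (Category.id_comp _)
    rw [this, h]
    exact IsPushout.of_hasPushout a b₂
  have p : pushout.inr a b ≫ m = κ ≫ pushout.inr a b₂ := by rw [hm]; exact pushout.inr_desc _ _ _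
  have P : IsPushout κ (pushout.inr a b) (pushout.inr a b₂) m :=
    (IsPushout.of_top s p t).flip
  exact Adhesive.mono_of_isPushout_of_mono_left P

/-- The map of pushouts induced by two monos (and identity on the base) is mono. -/
lemma aux_mono_map {z y y₂ w w₂ : C} (a : z ⟶ y) (b : z ⟶ w) (a₂ : z ⟶ y₂) (b₂ : z ⟶ w₂)
    (μ : y ⟶ y₂) (κ : w ⟶ w₂) [Mono μ] [Mono κ] (h : a ≫ μ = a₂) (h' : b ≫ κ = b₂) :
    Mono (pushout.map a b a₂ b₂ μ κ (𝟙 z) (by simp [h]) (by simp [h'])) := by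
  have e : pushout.map a b a₂ b₂ μ κ (𝟙 z) (by simp [h]) (by simp [h']) =
      pushout.map a b a₂ b μ (𝟙 w) (𝟙 z) (by simp [h]) (by simp) ≫
      pushout.map a₂ b a₂ b₂ (𝟙 y₂) κ (𝟙 z) (by simp) (by simp [h']) := by
    rw [pushout.map_comp]
    congr 1 <;> simp
  rw [e]
  have := aux_mono_left a b a₂ μ h
  have := aux_mono_right a₂ b b₂ κ h'
  exact mono_comp _ _

end Aux

/-- In a topos (adhesive category), the horizontal (pushout)
composite of two composable monic spans of cospans again has monic legs. -/
theorem stmt5 {C : Type u} [Category.{v} C] [Adhesive C] [HasPushouts C]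
    {x y y' y'' z w w' w'' v : C}
    (ix : x ⟶ y) (ix' : x ⟶ y') (ix'' : x ⟶ y'')
    (oz : z ⟶ y) (oz' : z ⟶ y') (oz'' : z ⟶ y'')
    (iw : z ⟶ w) (iw' : z ⟶ w') (iw'' : z ⟶ w'')
    (ov : v ⟶ w) (ov' : v ⟶ w') (ov'' : v ⟶ w'')
    (μ : y' ⟶ y) (ν : y' ⟶ y'') (κ : w' ⟶ w) (lam : w' ⟶ w'')
    [Mono μ] [Mono ν] [Mono κ] [Mono lam]
    (h1 : ix' ≫ μ = ix) (h2 : ix' ≫ ν = ix'')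
    (h3 : oz' ≫ μ = oz) (h4 : oz' ≫ ν = oz'')
    (h5 : iw' ≫ κ = iw) (h6 : iw' ≫ lam = iw'')
    (h7 : ov' ≫ κ = ov) (h8 : ov' ≫ lam = ov'') :
    Mono (pushout.map oz' iw' oz iw μ κ (𝟙 z) (by simp [h3]) (by simp [h5])) ∧
    Mono (pushout.map oz' iw' oz'' iw'' ν lam (𝟙 z) (by simp [h4]) (by simp [h6])) := by
  exact ⟨aux_mono_map oz' iw' oz iw μ κ h3 h5, aux_mono_map oz' iw' oz'' iw'' ν lam h4 h6⟩
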